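/- Let C ⊂ V be a proper closed convex full-dimensional cone, s > 1, and f ∈ HConc_s(C) continuously differentiable on C°, with D(v) = Df(v)/s. Let C_T ⊂ C° be a nonempty open subcone. If the restriction of D to C_T is injective, then f is strictly log concave on C_T: for any non-proportional v, x ∈ C_T one has f(v+x)^{1/s} > f(v)^{1/s} + f(x)^{1/s}. -/

import Mathlib

open Set Topology

variable {V : Type*} [NormedAddCommGroup V] [NormedSpace ℝ V] [FiniteDimensional ℝ V]

/-- The dual cone of `C` inside the continuous dual of `V`. -/
def dualCone (C : Set V) : Set (V →L[ℝ] ℝ) := {w | ∀ v ∈ C, 0 ≤ w v}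

/-- The polar transform of a weight-`s` homogeneous function `f` on the cone `C`. -/
noncomputable def polar (C : Set V) (s : ℝ) (f : V → ℝ) (w : V →L[ℝ] ℝ) : ℝ :=
  sInf ((fun v => (w v / f v ^ (1/s)) ^ (s/(s-1))) '' interior C)

theorem injective_implies_strict_log_concave
    (C : Set V) (hCcl : IsClosed C) (hCcv : Convex ℝ C)
    (hCcone : ∀ v ∈ C, ∀ t : ℝ, 0 ≤ t → t • v ∈ C)
    (hCproper : ∀ v ∈ C, -v ∈ C → v = 0)
    (hCfull : (interior C).Nonempty)
    (s : ℝ) (hs : 1 < s) (f : V → ℝ)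
    (hfusc : UpperSemicontinuousOn f C)
    (hf0 : ∀ v ∈ C, 0 ≤ f v)
    (hfhom : ∀ t : ℝ, 0 ≤ t → ∀ v ∈ C, f (t • v) = t ^ s * f v)
    (hfpos : ∀ v ∈ interior C, 0 < f v)
    (hfconc : ∀ v ∈ C, ∀ x ∈ C, f v ^ (1/s) + f x ^ (1/s) ≤ f (v + x) ^ (1/s))
    (hfC1 : ContDiffOn ℝ 1 f (interior C))
    (T : Set V) (hTsub : T ⊆ interior C) (hTne : T.Nonempty)
    (hTcone : ∀ v ∈ T, ∀ t : ℝ, 0 < t → t • v ∈ T)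
    (hTopen : IsOpen T)
    (hinj : Set.InjOn (fun v => (s⁻¹ • fderiv ℝ f v : V →L[ℝ] ℝ)) T) :
    ∀ v ∈ T, ∀ x ∈ T, (¬ ∃ t : ℝ, x = t • v) →
      f v ^ (1/s) + f x ^ (1/s) < f (v + x) ^ (1/s) := by
  intro v hv x hx hprop
  by_contra hlt
  push_neg at hlt
  have hvC' : v ∈ interior C := hTsub hv
  have hxC' : x ∈ interior C := hTsub hx
  have hvC : v ∈ C := interior_subset hvC'
  have hxC : x ∈ C := interior_subset hxC'
  have hs0 : s ≠ 0 := by linarith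
  have haddC : ∀ a ∈ C, ∀ b ∈ C, a + b ∈ C := by
    intro a ha b hb
    have hm : (1/2 : ℝ) • a + (1/2 : ℝ) • b ∈ C :=
      hCcv ha hb (by norm_num) (by norm_num) (by norm_num)
    have h2 := hCcone _ hm 2 (by norm_num)
    have : (2:ℝ) • ((1/2 : ℝ) • a + (1/2 : ℝ) • b) = a + b := by
      rw [smul_add, smul_smul, smul_smul]; norm_num
    rwa [this] at h2
  have hvxC' : v + x ∈ interior C := by
    have hopen : IsOpen ((fun u => u + x) '' interior C) :=
      (isOpenMap_add_right x) _ isOpen_interior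
    have hsub : (fun u => u + x) '' interior C ⊆ C := by
      rintro _ ⟨u, hu, rfl⟩
      exact haddC u (interior_subset hu) x hxC
    exact interior_maximal hsub hopen ⟨v, hvC', rfl⟩
  have heq : f v ^ (1/s) + f x ^ (1/s) = f (v + x) ^ (1/s) :=
    le_antisymm (hfconc v hvC x hxC) hlt
  have hdiff : ∀ u ∈ interior C, HasFDerivAt f (fderiv ℝ f u) u := by
    intro u hu
    exact ((hfC1.differentiableOn one_ne_zero).differentiableAt
      (isOpen_interior.mem_nhds hu)).hasFDerivAt
  have hFdiff : ∀ u ∈ interior C,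
      HasFDerivAt (fun w => f w ^ (1/s)) (((1/s) * f u ^ (1/s - 1)) • fderiv ℝ f u) u := by
    intro u hu
    exact (hdiff u hu).rpow_const (Or.inl (ne_of_gt (hfpos u hu)))
  -- key: equality forces the F-gradients at a and a+b to coincide
  have key : ∀ a ∈ interior C, ∀ b ∈ C, a + b ∈ interior C →
      f a ^ (1/s) + f b ^ (1/s) = f (a + b) ^ (1/s) →
      ((1/s) * f (a + b) ^ (1/s - 1)) • fderiv ℝ f (a + b)
        = ((1/s) * f a ^ (1/s - 1)) • fderiv ℝ f a := by
    intro a ha b hb hab habeq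
    have hFa := hFdiff a ha
    have hFab := hFdiff (a + b) hab
    have hshift : HasFDerivAt (fun u => f (u + b) ^ (1/s))
        (((1/s) * f (a + b) ^ (1/s - 1)) • fderiv ℝ f (a + b)) a := by
      have hid : HasFDerivAt (fun u : V => u + b) (ContinuousLinearMap.id ℝ V) a :=
        (hasFDerivAt_id a).add_const b
      have h := hFab.comp a hid
      exact h.congr_fderiv (by ext; simp)
    have hmin : IsLocalMin (fun u => f (u + b) ^ (1/s) - f u ^ (1/s)) a := by
      have hmem : interior C ∈ 𝓝 a := isOpen_interior.mem_nhds ha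
      refine Filter.eventually_of_mem hmem fun u hu => ?_
      have h1 : f u ^ (1/s) + f b ^ (1/s) ≤ f (u + b) ^ (1/s) :=
        hfconc u (interior_subset hu) b hb
      simp only []
      linarith
    have hz := hmin.hasFDerivAt_eq_zero (hshift.sub hFa)
    exact sub_eq_zero.mp hz
  have e1 := key v hvC' x hxC hvxC' heq
  have e2 := key x hxC' v hvC (by rwa [add_comm]) (by rw [add_comm x v]; linarith)
  rw [add_comm x v] at e2
  have eVX : ((1/s) * f v ^ (1/s - 1)) • fderiv ℝ f v
      = ((1/s) * f x ^ (1/s - 1)) • fderiv ℝ f x := by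
    rw [← e1, ← e2]
  have ha : 0 < f v := hfpos v hvC'
  have hb : 0 < f x := hfpos x hxC'
  set t : ℝ := (f v / f x) ^ (1/s) with ht_def
  have ht : 0 < t := Real.rpow_pos_of_pos (div_pos ha hb) _
  have htx : t • x ∈ T := hTcone x hx t ht
  have htxC' : t • x ∈ interior C := hTsub htx
  -- homogeneity of the gradient
  have hhom : fderiv ℝ f (t • x) = t ^ (s - 1) • fderiv ℝ f x := by
    have hsm : HasFDerivAt (fun u : V => t • u) (t • ContinuousLinearMap.id ℝ V) x :=
      (hasFDerivAt_id x).const_smul t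
    have h1 : HasFDerivAt (fun u => f (t • u)) (t • fderiv ℝ f (t • x)) x := by
      have h := (hdiff _ htxC').comp x hsm
      refine h.congr_fderiv ?_
      ext w
      simp
    have h2 : HasFDerivAt (fun u => t ^ s * f u) ((t ^ s) • fderiv ℝ f x) x :=
      (hdiff x hxC').const_mul (t ^ s)
    have heqf : (fun u => f (t • u)) =ᶠ[𝓝 x] fun u => t ^ s * f u :=
      Filter.eventually_of_mem (isOpen_interior.mem_nhds hxC')
        fun u hu => hfhom t ht.le u (interior_subset hu)
    have h1' : HasFDerivAt (fun u => t ^ s * f u) (t • fderiv ℝ f (t • x)) x :=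
      h1.congr_of_eventuallyEq heqf.symm
    have huniq : t • fderiv ℝ f (t • x) = (t ^ s) • fderiv ℝ f x := h1'.unique h2
    have hts : t⁻¹ * t ^ s = t ^ (s - 1) := by
      rw [Real.rpow_sub ht, Real.rpow_one, div_eq_inv_mul]
    calc fderiv ℝ f (t • x) = t⁻¹ • t • fderiv ℝ f (t • x) := by
          rw [smul_smul, inv_mul_cancel₀ (ne_of_gt ht), one_smul]
      _ = t⁻¹ • (t ^ s) • fderiv ℝ f x := by rw [huniq]
      _ = t ^ (s - 1) • fderiv ℝ f x := by rw [smul_smul, hts]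
  -- the normalized gradients agree at v and t • x
  have hc1 : ((1/s) * f v ^ (1/s - 1)) ≠ 0 := by
    have := Real.rpow_pos_of_pos ha (1/s - 1)
    positivity
  have hDv : fderiv ℝ f v
      = ((f v ^ (1/s - 1))⁻¹ * f x ^ (1/s - 1)) • fderiv ℝ f x := by
    have h := congrArg (fun L => (((1/s) * f v ^ (1/s - 1))⁻¹ : ℝ) • L) eVX
    simp only [smul_smul] at h
    rw [inv_mul_cancel₀ hc1, one_smul] at h
    rw [h]
    congr 1
    field_simp
  have hscal : t ^ (s - 1) = (f v ^ (1/s - 1))⁻¹ * f x ^ (1/s - 1) := by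
    have h1 : t ^ (s - 1) = (f v / f x) ^ ((1/s) * (s - 1)) := by
      rw [ht_def, ← Real.rpow_mul (div_pos ha hb).le]
    have h2 : (1/s) * (s - 1) = -(1/s - 1) := by field_simp; ring
    rw [h1, h2, Real.rpow_neg (div_pos ha hb).le, Real.div_rpow ha.le hb.le, inv_div]
    ring
  have hDeq : (fun u => (s⁻¹ • fderiv ℝ f u : V →L[ℝ] ℝ)) v
      = (fun u => (s⁻¹ • fderiv ℝ f u : V →L[ℝ] ℝ)) (t • x) := by
    simp only [hhom, hDv, smul_smul, hscal]
  have hveq : v = t • x := hinj hv htx hDeq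
  exact hprop ⟨t⁻¹, by rw [hveq, smul_smul, inv_mul_cancel₀ (ne_of_gt ht), one_smul]⟩
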